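/- Let G be a connected simple graph on [n] and S ⊆ [n]. Then P_S(G) is a minimal prime of J_G if and only if S = ∅, or S ≠ ∅ and for each i ∈ S one has c(S∖{i}) < c(S), i.e., each i ∈ S is a cut vertex of the induced subgraph of G on ([n]∖S) ∪ {i}. -/

import Mathlib

open MvPolynomial

/-- The binomial `f_{ab} = x_a y_b - x_b y_a` in `K[x_1,…,x_n,y_1,…,y_n]`. -/
noncomputable def edgeBinomial (K : Type*) [Field K] {n : ℕ} (a b : Fin n) :
    MvPolynomial (Fin n ⊕ Fin n) K :=
  X (Sum.inl a) * X (Sum.inr b) - X (Sum.inl b) * X (Sum.inr a)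

/-- The binomial edge ideal `J_G` of a simple graph `G` on `[n]`. -/
noncomputable def binomialEdgeIdeal (K : Type*) [Field K] {n : ℕ}
    (G : SimpleGraph (Fin n)) : Ideal (MvPolynomial (Fin n ⊕ Fin n) K) :=
  Ideal.span {p | ∃ i j : Fin n, G.Adj i j ∧ i < j ∧ p = edgeBinomial K i j}

/-- The prime ideal `P_U(G)`. -/
noncomputable def componentPrime (K : Type*) [Field K] {n : ℕ}
    (G : SimpleGraph (Fin n)) (U : Set (Fin n)) :
    Ideal (MvPolynomial (Fin n ⊕ Fin n) K) :=
  Ideal.span ({p | ∃ i ∈ U, p = X (Sum.inl i) ∨ p = X (Sum.inr i)} ∪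
    {p | ∃ a b : (Uᶜ : Set (Fin n)), (G.induce Uᶜ).Reachable a b ∧
      p = edgeBinomial K a.1 b.1})

/-- `c(U)`: the number of connected components of the induced subgraph of `G`
on `[n] ∖ U`. -/
noncomputable def numComponents {n : ℕ} (G : SimpleGraph (Fin n))
    (U : Set (Fin n)) : ℕ :=
  Nat.card ((G.induce Uᶜ).ConnectedComponent)

noncomputable section

namespace BEI

variable (K : Type*) [Field K] {n : ℕ} (G : SimpleGraph (Fin n)) (U : Set (Fin n))

abbrev CC := (G.induce Uᶜ).ConnectedComponent

def cOf {i : Fin n} (h : i ∉ U) : CC G U := (G.induce Uᶜ).connectedComponentMk ⟨i, h⟩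

open Classical in
def tgtVar : (Fin n ⊕ Fin n) → MvPolynomial ((CC G U ⊕ CC G U) ⊕ Fin n) K
  | .inl i => if h : i ∈ U then 0 else X (.inl (.inl (cOf G U h))) * X (.inr i)
  | .inr i => if h : i ∈ U then 0 else X (.inl (.inr (cOf G U h))) * X (.inr i)

def phi : MvPolynomial (Fin n ⊕ Fin n) K →ₐ[K] MvPolynomial ((CC G U ⊕ CC G U) ⊕ Fin n) K :=
  aeval (tgtVar K G U)

lemma phi_X_inl_mem {i : Fin n} (h : i ∈ U) : phi K G U (X (.inl i)) = 0 := by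
  simp [phi, tgtVar, h]

lemma phi_X_inr_mem {i : Fin n} (h : i ∈ U) : phi K G U (X (.inr i)) = 0 := by
  simp [phi, tgtVar, h]

lemma phi_X_inl_not_mem {i : Fin n} (h : i ∉ U) :
    phi K G U (X (.inl i)) = X (.inl (.inl (cOf G U h))) * X (.inr i) := by
  simp [phi, tgtVar, h]

lemma phi_X_inr_not_mem {i : Fin n} (h : i ∉ U) :
    phi K G U (X (.inr i)) = X (.inl (.inr (cOf G U h))) * X (.inr i) := by
  simp [phi, tgtVar, h]

/-- same component for reachable vertices -/
lemma cOf_eq_of_reachable {a b : Fin n} (ha : a ∉ U) (hb : b ∉ U)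
    (h : (G.induce Uᶜ).Reachable ⟨a, ha⟩ ⟨b, hb⟩) : cOf G U ha = cOf G U hb :=
  SimpleGraph.ConnectedComponent.sound h

lemma phi_edgeBinomial_of_reachable {a b : Fin n} (ha : a ∉ U) (hb : b ∉ U)
    (h : (G.induce Uᶜ).Reachable ⟨a, ha⟩ ⟨b, hb⟩) :
    phi K G U (edgeBinomial K a b) = 0 := by
  have hc : cOf G U ha = cOf G U hb := cOf_eq_of_reachable G U ha hb h
  simp only [edgeBinomial, map_sub, map_mul, phi_X_inl_not_mem K G U ha,
    phi_X_inr_not_mem K G U hb, phi_X_inl_not_mem K G U hb, phi_X_inr_not_mem K G U ha, hc]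
  ring

lemma componentPrime_le_ker :
    componentPrime K G U ≤ RingHom.ker (phi K G U).toRingHom := by
  rw [componentPrime, Ideal.span_le]
  rintro p (⟨i, hi, (rfl | rfl)⟩ | ⟨a, b, hr, rfl⟩)
  · exact phi_X_inl_mem K G U hi
  · exact phi_X_inr_mem K G U hi
  · have ha : (a : Fin n) ∉ U := a.2
    have hb : (b : Fin n) ∉ U := b.2
    have : (G.induce Uᶜ).Reachable ⟨a.1, ha⟩ ⟨b.1, hb⟩ := hr
    exact phi_edgeBinomial_of_reachable K G U ha hb this


def UFree (d : (Fin n ⊕ Fin n) →₀ ℕ) : Prop :=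
  ∀ i ∈ U, d (.inl i) = 0 ∧ d (.inr i) = 0

def IsNormal (d : (Fin n ⊕ Fin n) →₀ ℕ) : Prop :=
  UFree U d ∧ ∀ (a b : Fin n) (ha : a ∉ U) (hb : b ∉ U),
    cOf G U ha = cOf G U hb → a < b → d (.inl a) = 0 ∨ d (.inr b) = 0

def mu {n : ℕ} (d : (Fin n ⊕ Fin n) →₀ ℕ) : ℕ := ∑ i : Fin n, i.val * d (.inr i)

lemma single_add_sub {d : (Fin n ⊕ Fin n) →₀ ℕ} {v : Fin n ⊕ Fin n} (hv : d v ≠ 0) :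
    Finsupp.single v 1 + (d - Finsupp.single v 1) = d := by
  ext w
  simp only [Finsupp.add_apply, Finsupp.tsub_apply, Finsupp.single_apply]
  split_ifs with h
  · subst h; omega
  · omega

lemma monomial_factor_X {d : (Fin n ⊕ Fin n) →₀ ℕ} {v : Fin n ⊕ Fin n} (hv : d v ≠ 0) :
    (monomial d (1:K)) = X v * (monomial (d - Finsupp.single v 1) (1:K)) := by
  conv_lhs => rw [← single_add_sub hv]
  rw [X, monomial_mul, one_mul]

lemma X_inl_mem_componentPrime {i : Fin n} (hi : i ∈ U) :
    (X (Sum.inl i) : MvPolynomial (Fin n ⊕ Fin n) K) ∈ componentPrime K G U :=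
  Ideal.subset_span (Or.inl ⟨i, hi, Or.inl rfl⟩)

lemma X_inr_mem_componentPrime {i : Fin n} (hi : i ∈ U) :
    (X (Sum.inr i) : MvPolynomial (Fin n ⊕ Fin n) K) ∈ componentPrime K G U :=
  Ideal.subset_span (Or.inl ⟨i, hi, Or.inr rfl⟩)

lemma edgeBinomial_mem_componentPrime {a b : Fin n} (ha : a ∉ U) (hb : b ∉ U)
    (h : (G.induce Uᶜ).Reachable ⟨a, ha⟩ ⟨b, hb⟩) :
    edgeBinomial K a b ∈ componentPrime K G U :=
  Ideal.subset_span (Or.inr ⟨⟨a, ha⟩, ⟨b, hb⟩, h, rfl⟩)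

lemma mu_add {n : ℕ} (x y : (Fin n ⊕ Fin n) →₀ ℕ) : mu (x + y) = mu x + mu y := by
  simp [mu, mul_add, Finset.sum_add_distrib]

lemma mu_single_inl {n : ℕ} (j : Fin n) (k : ℕ) :
    mu (Finsupp.single (Sum.inl j) k) = 0 := by
  classical
  simp [mu, Finsupp.single_apply]

lemma mu_single_inr {n : ℕ} (j : Fin n) (k : ℕ) :
    mu (Finsupp.single (Sum.inr j) k) = j.val * k := by
  classical
  simp only [mu, Finsupp.single_apply, Sum.inr.injEq]
  rw [Finset.sum_congr rfl (fun i _ => by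
    rw [show (i.val * if j = i then k else 0) = if j = i then i.val * k else 0 by
      split_ifs <;> simp])]
  simp

lemma decompose_two {σ : Type*} {d : σ →₀ ℕ} {v w : σ} (hvw : v ≠ w)
    (hv : d v ≠ 0) (hw : d w ≠ 0) :
    d = (d - Finsupp.single v 1 - Finsupp.single w 1) + Finsupp.single v 1
      + Finsupp.single w 1 := by
  classical
  ext u
  simp only [Finsupp.add_apply, Finsupp.tsub_apply, Finsupp.single_apply]
  by_cases h1 : v = u <;> by_cases h2 : w = u <;> first
    | (exfalso; exact hvw (h1.trans h2.symm))
    | (subst h1; simp_all; omega)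
    | (subst h2; simp_all; omega)
    | (simp [h1, h2])

lemma reduce_monomial (d : (Fin n ⊕ Fin n) →₀ ℕ) :
    ∃ g, ((monomial d (1:K)) - g) ∈ componentPrime K G U ∧
      ∀ e ∈ g.support, IsNormal G U e := by
  classical
  suffices H : ∀ k (d : (Fin n ⊕ Fin n) →₀ ℕ), mu d = k →
      ∃ g, ((monomial d (1:K)) - g) ∈ componentPrime K G U ∧
        ∀ e ∈ g.support, IsNormal G U e from H (mu d) d rfl
  intro k
  induction k using Nat.strong_induction_on with
  | _ k IH =>
    intro d hk
    by_cases hU : ∃ i ∈ U, d (.inl i) ≠ 0 ∨ d (.inr i) ≠ 0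
    · obtain ⟨i, hi, hcase⟩ := hU
      refine ⟨0, ?_, by simp⟩
      rw [sub_zero]
      rcases hcase with h | h
      · rw [monomial_factor_X K h, mul_comm]
        exact Ideal.mul_mem_left _ _ (X_inl_mem_componentPrime K G U hi)
      · rw [monomial_factor_X K h, mul_comm]
        exact Ideal.mul_mem_left _ _ (X_inr_mem_componentPrime K G U hi)
    · by_cases hN : ∃ (a b : Fin n) (ha : a ∉ U) (hb : b ∉ U),
        cOf G U ha = cOf G U hb ∧ a < b ∧ d (.inl a) ≠ 0 ∧ d (.inr b) ≠ 0
      · obtain ⟨a, b, ha, hb, hcc, hab, h1, h2⟩ := hN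
        set e : (Fin n ⊕ Fin n) →₀ ℕ :=
          d - Finsupp.single (.inl a) 1 - Finsupp.single (.inr b) 1 with he
        have hde : d = e + Finsupp.single (.inl a) 1 + Finsupp.single (.inr b) 1 :=
          decompose_two (by simp) h1 h2
        set d' : (Fin n ⊕ Fin n) →₀ ℕ :=
          e + Finsupp.single (.inl b) 1 + Finsupp.single (.inr a) 1 with hd'
        have hA : (monomial d (1:K)) = X (.inl a) * X (.inr b) * monomial e 1 := by
          rw [hde, show e + Finsupp.single (Sum.inl a) 1 + Finsupp.single (Sum.inr b) 1
            = Finsupp.single (Sum.inl a) 1 + Finsupp.single (Sum.inr b) 1 + e by abel]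
          simp only [X, monomial_mul, one_mul]
        have hB : (monomial d' (1:K)) = X (.inl b) * X (.inr a) * monomial e 1 := by
          rw [hd', show e + Finsupp.single (Sum.inl b) 1 + Finsupp.single (Sum.inr a) 1
            = Finsupp.single (Sum.inl b) 1 + Finsupp.single (Sum.inr a) 1 + e by abel]
          simp only [X, monomial_mul, one_mul]
        have key : (monomial d (1:K)) - monomial d' 1 =
            edgeBinomial K a b * monomial e 1 := by
          rw [hA, hB, edgeBinomial]; ring
        have hmu : mu d' < k := by
          have h1' : mu d = mu e + b.val := by
            rw [hde, mu_add, mu_add, mu_single_inl, mu_single_inr]; omega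
          have h2' : mu d' = mu e + a.val := by
            rw [hd', mu_add, mu_add, mu_single_inl, mu_single_inr]; omega
          have : (a : ℕ) < (b : ℕ) := hab
          omega
        obtain ⟨g, hg1, hg2⟩ := IH (mu d') hmu d' rfl
        refine ⟨g, ?_, hg2⟩
        have hsplit : (monomial d (1:K)) - g
            = (edgeBinomial K a b * monomial e 1) + ((monomial d' (1:K)) - g) := by
          rw [← key]; ring
        rw [hsplit]
        refine Ideal.add_mem _ (Ideal.mul_mem_right _ _ ?_) hg1
        exact edgeBinomial_mem_componentPrime K G U ha hb
          (SimpleGraph.ConnectedComponent.exact hcc)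
      · refine ⟨monomial d 1, by simp, ?_⟩
        intro e hesupp
        rw [support_monomial, if_neg (one_ne_zero)] at hesupp
        rw [Finset.mem_singleton] at hesupp
        subst hesupp
        push_neg at hU hN
        refine ⟨fun i hi => hU i hi, ?_⟩
        intro a b ha hb hcc hab
        by_contra hcon
        push_neg at hcon
        exact hcon.2 (hN a b ha hb hcc hab hcon.1)

lemma reduce_poly (f : MvPolynomial (Fin n ⊕ Fin n) K) :
    ∃ g, (f - g) ∈ componentPrime K G U ∧ ∀ e ∈ g.support, IsNormal G U e := by
  induction f using MvPolynomial.induction_on' with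
  | monomial u a =>
    obtain ⟨g, hg1, hg2⟩ := reduce_monomial K G U u
    refine ⟨a • g, ?_, fun e he => hg2 e (Finsupp.support_smul he)⟩
    have : (monomial u a : MvPolynomial (Fin n ⊕ Fin n) K) - a • g
        = a • ((monomial u (1:K)) - g) := by
      rw [smul_sub]
      congr 1
      rw [smul_monomial]; norm_num
    rw [this, smul_eq_C_mul]
    exact Ideal.mul_mem_left _ _ hg1
  | add p q hp hq =>
    obtain ⟨g1, hg1, hg1'⟩ := hp
    obtain ⟨g2, hg2, hg2'⟩ := hq
    refine ⟨g1 + g2, ?_, fun e he => ?_⟩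
    · have : p + q - (g1 + g2) = (p - g1) + (q - g2) := by ring
      rw [this]; exact Ideal.add_mem _ hg1 hg2
    · rcases Finset.mem_union.mp (Finsupp.support_add he) with h | h
      · exact hg1' e h
      · exact hg2' e h

open Classical in
def hv : (Fin n ⊕ Fin n) → ((CC G U ⊕ CC G U) ⊕ Fin n)
  | .inl i => if h : i ∈ U then .inr i else .inl (.inl (cOf G U h))
  | .inr i => if h : i ∈ U then .inr i else .inl (.inr (cOf G U h))

def zv : (Fin n ⊕ Fin n) → ((CC G U ⊕ CC G U) ⊕ Fin n)
  | .inl i => .inr i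
  | .inr i => .inr i

noncomputable def psi (d : (Fin n ⊕ Fin n) →₀ ℕ) : ((CC G U ⊕ CC G U) ⊕ Fin n) →₀ ℕ :=
  d.sum fun v k => Finsupp.single (hv G U v) k + Finsupp.single (zv G U v) k

lemma psi_zero : psi G U 0 = 0 := Finsupp.sum_zero_index

lemma psi_single (v : Fin n ⊕ Fin n) (k : ℕ) :
    psi G U (Finsupp.single v k)
      = Finsupp.single (hv G U v) k + Finsupp.single (zv G U v) k := by
  rw [psi, Finsupp.sum_single_index]
  simp

lemma psi_add (x y : (Fin n ⊕ Fin n) →₀ ℕ) : psi G U (x + y) = psi G U x + psi G U y := by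
  rw [psi, psi, psi]
  apply Finsupp.sum_add_index' <;> intros <;> simp [Finsupp.single_add] <;> abel

lemma phi_X_not_mem' {v : Fin n ⊕ Fin n} (h : (Sum.elim (· ∉ U) (· ∉ U)) v) :
    phi K G U (X v) = X (hv G U v) * X (zv G U v) := by
  rcases v with i | i <;> simp only [Sum.elim_inl, Sum.elim_inr] at h
  · rw [phi_X_inl_not_mem K G U h]
    simp [hv, zv, dif_neg h]
  · rw [phi_X_inr_not_mem K G U h]
    simp [hv, zv, dif_neg h]

lemma UFree_add {x y : (Fin n ⊕ Fin n) →₀ ℕ} (h : UFree U (x + y)) :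
    UFree U x ∧ UFree U y := by
  constructor <;> intro i hi <;> have := h i hi <;>
    simp only [Finsupp.add_apply] at this <;> omega

lemma phi_monomial_ufree {d : (Fin n ⊕ Fin n) →₀ ℕ} (hU : UFree U d) :
    phi K G U (monomial d 1) = monomial (psi G U d) 1 := by
  induction d using Finsupp.induction with
  | zero => simp [psi_zero]
  | single_add v k f hvf hk ih =>
    obtain ⟨hU1, hU2⟩ := UFree_add U hU
    have hvU : (Sum.elim (· ∉ U) (· ∉ U)) v := by
      rcases v with i | i <;> intro hiU <;> have := hU1 i hiU <;>
        simp [Finsupp.single_apply] at this <;> omega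
    rw [show (monomial (Finsupp.single v k + f) (1:K))
        = monomial (Finsupp.single v k) 1 * monomial f 1 by rw [monomial_mul, one_mul]]
    rw [map_mul, ih hU2]
    rw [show (monomial (Finsupp.single v k) (1:K)) = X v ^ k by
      rw [X_pow_eq_monomial]]
    rw [map_pow, phi_X_not_mem' K G U hvU]
    rw [psi_add, psi_single]
    rw [mul_pow, X_pow_eq_monomial, X_pow_eq_monomial, monomial_mul, monomial_mul]
    simp [add_assoc]

open Classical in
noncomputable def Fc (c : CC G U) : Finset (Fin n) :=
  Finset.univ.filter (fun i => ∃ h : i ∉ U, cOf G U h = c)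

lemma psi_apply_inr {d : (Fin n ⊕ Fin n) →₀ ℕ} (hU : UFree U d) (i : Fin n) :
    psi G U d (.inr i) = d (.inl i) + d (.inr i) := by
  classical
  rw [psi, Finsupp.sum_apply, Finsupp.sum_fintype _ _ (by simp), Fintype.sum_sum_type]
  have A : ∀ j : Fin n,
      (Finsupp.single (hv G U (Sum.inl j)) (d (Sum.inl j))
        + Finsupp.single (zv G U (Sum.inl j)) (d (Sum.inl j))) (Sum.inr i)
      = if j = i then d (Sum.inl j) else 0 := by
    intro j
    by_cases hj : j ∈ U
    · have h0 : d (Sum.inl j) = 0 := (hU j hj).1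
      simp [h0]
    · simp [hv, zv, dif_neg hj, Finsupp.single_apply]
  have B : ∀ j : Fin n,
      (Finsupp.single (hv G U (Sum.inr j)) (d (Sum.inr j))
        + Finsupp.single (zv G U (Sum.inr j)) (d (Sum.inr j))) (Sum.inr i)
      = if j = i then d (Sum.inr j) else 0 := by
    intro j
    by_cases hj : j ∈ U
    · have h0 : d (Sum.inr j) = 0 := (hU j hj).2
      simp [h0]
    · simp [hv, zv, dif_neg hj, Finsupp.single_apply]
  rw [Finset.sum_congr rfl fun j _ => A j, Finset.sum_congr rfl fun j _ => B j,
    Finset.sum_ite_eq' Finset.univ i (fun j => d (Sum.inl j)),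
    Finset.sum_ite_eq' Finset.univ i (fun j => d (Sum.inr j))]
  simp

lemma psi_apply_inl_inl {d : (Fin n ⊕ Fin n) →₀ ℕ} (hU : UFree U d) (c : CC G U) :
    psi G U d (.inl (.inl c)) = ∑ i ∈ Fc G U c, d (.inl i) := by
  classical
  rw [psi, Finsupp.sum_apply, Finsupp.sum_fintype _ _ (by simp), Fintype.sum_sum_type]
  have A : ∀ j : Fin n,
      (Finsupp.single (hv G U (Sum.inl j)) (d (Sum.inl j))
        + Finsupp.single (zv G U (Sum.inl j)) (d (Sum.inl j))) (Sum.inl (Sum.inl c))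
      = if (∃ h : j ∉ U, cOf G U h = c) then d (Sum.inl j) else 0 := by
    intro j
    by_cases hj : j ∈ U
    · have h0 : d (Sum.inl j) = 0 := (hU j hj).1
      simp only [h0, Finsupp.single_zero, Finsupp.add_apply, Finsupp.coe_zero,
        Pi.zero_apply, zero_add, ite_self]
    · simp only [hv, zv, dif_neg hj, Finsupp.add_apply, Finsupp.single_apply,
        Sum.inl.injEq, reduceCtorEq, if_false, add_zero]
      by_cases hc : cOf G U hj = c
      · rw [if_pos hc, if_pos ⟨hj, hc⟩]
      · rw [if_neg (by simpa using hc), if_neg (by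
          rintro ⟨h', hc'⟩; exact hc hc')]
  have B : ∀ j : Fin n,
      (Finsupp.single (hv G U (Sum.inr j)) (d (Sum.inr j))
        + Finsupp.single (zv G U (Sum.inr j)) (d (Sum.inr j))) (Sum.inl (Sum.inl c))
      = 0 := by
    intro j
    by_cases hj : j ∈ U
    · have h0 : d (Sum.inr j) = 0 := (hU j hj).2
      simp [h0]
    · simp [hv, zv, dif_neg hj, Finsupp.single_apply]
  rw [Finset.sum_congr rfl fun j _ => A j, Finset.sum_congr rfl fun j _ => B j]
  rw [Finset.sum_const_zero, add_zero, Fc, Finset.sum_filter]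

lemma psi_apply_inl_inr {d : (Fin n ⊕ Fin n) →₀ ℕ} (hU : UFree U d) (c : CC G U) :
    psi G U d (.inl (.inr c)) = ∑ i ∈ Fc G U c, d (.inr i) := by
  classical
  rw [psi, Finsupp.sum_apply, Finsupp.sum_fintype _ _ (by simp), Fintype.sum_sum_type]
  have A : ∀ j : Fin n,
      (Finsupp.single (hv G U (Sum.inl j)) (d (Sum.inl j))
        + Finsupp.single (zv G U (Sum.inl j)) (d (Sum.inl j))) (Sum.inl (Sum.inr c))
      = 0 := by
    intro j
    by_cases hj : j ∈ U
    · have h0 : d (Sum.inl j) = 0 := (hU j hj).1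
      simp [h0]
    · simp [hv, zv, dif_neg hj, Finsupp.single_apply]
  have B : ∀ j : Fin n,
      (Finsupp.single (hv G U (Sum.inr j)) (d (Sum.inr j))
        + Finsupp.single (zv G U (Sum.inr j)) (d (Sum.inr j))) (Sum.inl (Sum.inr c))
      = if (∃ h : j ∉ U, cOf G U h = c) then d (Sum.inr j) else 0 := by
    intro j
    by_cases hj : j ∈ U
    · have h0 : d (Sum.inr j) = 0 := (hU j hj).2
      simp only [h0, Finsupp.single_zero, Finsupp.add_apply, Finsupp.coe_zero,
        Pi.zero_apply, zero_add, ite_self]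
    · simp only [hv, zv, dif_neg hj, Finsupp.add_apply, Finsupp.single_apply,
        Sum.inr.injEq, Sum.inl.injEq, reduceCtorEq, if_false, add_zero]
      by_cases hc : cOf G U hj = c
      · rw [if_pos hc, if_pos ⟨hj, hc⟩]
      · rw [if_neg (by simpa using hc), if_neg (by
          rintro ⟨h', hc'⟩; exact hc hc')]
  rw [Finset.sum_congr rfl fun j _ => A j, Finset.sum_congr rfl fun j _ => B j]
  rw [Finset.sum_const_zero, zero_add, Fc, Finset.sum_filter]

lemma psi_inj_aux {d d' : (Fin n ⊕ Fin n) →₀ ℕ} (hd : IsNormal G U d)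
    (hd' : IsNormal G U d') (h : psi G U d = psi G U d') (a : Fin n)
    (hmin : ∀ j, j < a → d (.inr j) = d' (.inr j))
    (hlt : d (.inr a) < d' (.inr a)) : False := by
  classical
  have hv_eq : ∀ i, d (.inl i) + d (.inr i) = d' (.inl i) + d' (.inr i) := fun i => by
    rw [← psi_apply_inr G U hd.1 i, ← psi_apply_inr G U hd'.1 i, h]
  have ha : a ∉ U := by
    intro haU
    have := (hd'.1 a haU).2
    omega
  set c := cOf G U ha with hc
  have haF : a ∈ Fc G U c := by
    rw [Fc, Finset.mem_filter]
    exact ⟨Finset.mem_univ _, ha, rfl⟩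
  have hS : ∑ i ∈ Fc G U c, d (.inr i) = ∑ i ∈ Fc G U c, d' (.inr i) := by
    rw [← psi_apply_inl_inr G U hd.1 c, ← psi_apply_inl_inr G U hd'.1 c, h]
  set T := (Fc G U c).filter (fun i => a < i) with hT
  set notT := (Fc G U c).filter (fun i => ¬ a < i) with hnotT
  have hsplit : ∀ e : (Fin n ⊕ Fin n) →₀ ℕ,
      ∑ i ∈ Fc G U c, e (.inr i) = ∑ i ∈ T, e (.inr i) + ∑ i ∈ notT, e (.inr i) :=
    fun e => (Finset.sum_filter_add_sum_filter_not _ _ _).symm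
  have hanotT : a ∈ notT := by
    simp only [hnotT, Finset.mem_filter]
    exact ⟨haF, lt_irrefl a⟩
  have herase : ∑ i ∈ notT.erase a, d (.inr i) = ∑ i ∈ notT.erase a, d' (.inr i) := by
    apply Finset.sum_congr rfl
    intro j hj
    have hj1 : j ≠ a := (Finset.mem_erase.mp hj).1
    have hj2 : ¬ a < j := (Finset.mem_filter.mp (Finset.mem_erase.mp hj).2).2
    exact hmin j (lt_of_le_of_ne (not_lt.mp hj2) hj1)
  have hnotTd : ∑ i ∈ notT, d (.inr i) = d (.inr a) + ∑ i ∈ notT.erase a, d (.inr i) :=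
    (Finset.add_sum_erase _ _ hanotT).symm
  have hnotTd' : ∑ i ∈ notT, d' (.inr i) = d' (.inr a) + ∑ i ∈ notT.erase a, d' (.inr i) :=
    (Finset.add_sum_erase _ _ hanotT).symm
  have hTgt : ∑ i ∈ T, d' (.inr i) < ∑ i ∈ T, d (.inr i) := by
    have e1 := hsplit d
    have e2 := hsplit d'
    omega
  have : ∃ b ∈ T, d' (.inr b) < d (.inr b) := by
    by_contra hcon
    push_neg at hcon
    exact absurd (Finset.sum_le_sum hcon) (not_le.mpr hTgt)
  obtain ⟨b, hbT, hblt⟩ := this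
  obtain ⟨hbF, hab⟩ := Finset.mem_filter.mp hbT
  obtain ⟨hbU, hcb⟩ := by
    simpa only [Fc, Finset.mem_filter, Finset.mem_univ, true_and] using hbF
  have hdlb : d (.inr b) ≠ 0 := by omega
  have hdla : d (.inl a) ≠ 0 := by
    have := hv_eq a
    omega
  rcases hd.2 a b ha hbU (hc ▸ hcb.symm ▸ rfl) hab with h0 | h0
  · exact hdla h0
  · exact hdlb h0

lemma psi_inj {d d' : (Fin n ⊕ Fin n) →₀ ℕ} (hd : IsNormal G U d)
    (hd' : IsNormal G U d') (h : psi G U d = psi G U d') : d = d' := by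
  classical
  have hv_eq : ∀ i, d (.inl i) + d (.inr i) = d' (.inl i) + d' (.inr i) := fun i => by
    rw [← psi_apply_inr G U hd.1 i, ← psi_apply_inr G U hd'.1 i, h]
  have e_eq : ∀ i, d (.inr i) = d' (.inr i) := by
    by_contra hcon
    push_neg at hcon
    obtain ⟨i0, hi0⟩ := hcon
    set Diff := Finset.univ.filter (fun i : Fin n => d (.inr i) ≠ d' (.inr i)) with hDiff
    have hne : Diff.Nonempty := ⟨i0, by simp [hDiff, hi0]⟩
    set a := Diff.min' hne with hadef
    have haD : a ∈ Diff := Finset.min'_mem _ _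
    have hmin : ∀ j, j < a → d (.inr j) = d' (.inr j) := by
      intro j hj
      by_contra hj'
      have : a ≤ j := Finset.min'_le _ _ (by simp [hDiff, hj'])
      omega
    have hane : d (.inr a) ≠ d' (.inr a) := by
      simpa [hDiff] using haD
    rcases lt_or_gt_of_ne hane with hlt | hlt
    · exact psi_inj_aux G U hd hd' h a hmin hlt
    · exact psi_inj_aux G U hd' hd h.symm a (fun j hj => (hmin j hj).symm) hlt
  ext v
  rcases v with i | i
  · have := hv_eq i
    have := e_eq i
    omega
  · exact e_eq i

lemma phi_monomial_normal {d : (Fin n ⊕ Fin n) →₀ ℕ} (hU : UFree U d) (c : K) :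
    phi K G U (monomial d c) = monomial (psi G U d) c := by
  rw [show (monomial d c : MvPolynomial (Fin n ⊕ Fin n) K) = C c * monomial d 1 by
    rw [C_mul_monomial, mul_one]]
  rw [map_mul, phi_monomial_ufree K G U hU]
  rw [show (phi K G U) (C c) = C c from aeval_C _ c]
  rw [C_mul_monomial, mul_one]

lemma normal_supported_eq_zero {g : MvPolynomial (Fin n ⊕ Fin n) K}
    (hsupp : ∀ e ∈ g.support, IsNormal G U e) (hg : phi K G U g = 0) : g = 0 := by
  classical
  by_contra hne
  obtain ⟨d0, hd0⟩ := exists_coeff_ne_zero (by simpa using hne)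
  have hd0supp : d0 ∈ g.support := by simpa [mem_support_iff] using hd0
  have hrepr : g = ∑ d ∈ g.support, monomial d (coeff d g) :=
    (support_sum_monomial_coeff g).symm
  have hphi : phi K G U g = ∑ d ∈ g.support, monomial (psi G U d) (coeff d g) := by
    conv_lhs => rw [hrepr]
    rw [map_sum]
    exact Finset.sum_congr rfl fun d hd => phi_monomial_normal K G U (hsupp d hd).1 _
  have hcoeff : coeff (psi G U d0) (phi K G U g) = coeff d0 g := by
    rw [hphi, coeff_sum]
    rw [Finset.sum_congr rfl (fun d hd => coeff_monomial (psi G U d0) (psi G U d) _)]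
    have : ∀ d ∈ g.support,
        (if psi G U d = psi G U d0 then coeff d g else 0)
        = if d = d0 then coeff d g else 0 := by
      intro d hd
      by_cases hdd : d = d0
      · subst hdd; simp
      · rw [if_neg hdd, if_neg]
        intro hps
        exact hdd (psi_inj G U (hsupp d hd) (hsupp d0 hd0supp) hps)
    rw [Finset.sum_congr rfl this, Finset.sum_ite_eq' g.support d0 (fun d => coeff d g),
      if_pos hd0supp]
  rw [hg] at hcoeff
  simp only [coeff_zero] at hcoeff
  exact hd0 hcoeff.symm

lemma ker_phi_eq : RingHom.ker (phi K G U).toRingHom = componentPrime K G U := by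
  apply le_antisymm
  · intro f hf
    have hf0 : phi K G U f = 0 := hf
    obtain ⟨g, hg1, hg2⟩ := reduce_poly K G U f
    have hgker : phi K G U (f - g) = 0 := componentPrime_le_ker K G U hg1
    have : phi K G U g = 0 := by
      rw [map_sub, hf0, zero_sub, neg_eq_zero] at hgker
      exact hgker
    have hg0 : g = 0 := normal_supported_eq_zero K G U hg2 this
    rw [hg0, sub_zero] at hg1
    exact hg1
  · exact componentPrime_le_ker K G U

lemma componentPrime_isPrime : (componentPrime K G U).IsPrime := by
  rw [← ker_phi_eq]
  exact RingHom.ker_isPrime _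

lemma X_inl_not_mem_componentPrime {i : Fin n} (h : i ∉ U) :
    (X (Sum.inl i) : MvPolynomial (Fin n ⊕ Fin n) K) ∉ componentPrime K G U := by
  rw [← ker_phi_eq]
  intro hmem
  have : phi K G U (X (Sum.inl i)) = 0 := hmem
  rw [phi_X_inl_not_mem K G U h] at this
  exact (mul_ne_zero (X_ne_zero _) (X_ne_zero _)) this

lemma X_inr_not_mem_componentPrime {i : Fin n} (h : i ∉ U) :
    (X (Sum.inr i) : MvPolynomial (Fin n ⊕ Fin n) K) ∉ componentPrime K G U := by
  rw [← ker_phi_eq]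
  intro hmem
  have : phi K G U (X (Sum.inr i)) = 0 := hmem
  rw [phi_X_inr_not_mem K G U h] at this
  exact (mul_ne_zero (X_ne_zero _) (X_ne_zero _)) this

lemma edgeBinomial_not_mem_componentPrime {a b : Fin n} (ha : a ∉ U) (hb : b ∉ U)
    (hnr : ¬ (G.induce Uᶜ).Reachable ⟨a, ha⟩ ⟨b, hb⟩) :
    edgeBinomial K a b ∉ componentPrime K G U := by
  classical
  rw [← ker_phi_eq]
  intro hmem
  have h0 : phi K G U (edgeBinomial K a b) = 0 := hmem
  have hcc : cOf G U ha ≠ cOf G U hb := fun hcc =>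
    hnr (SimpleGraph.ConnectedComponent.exact hcc)
  rw [edgeBinomial, map_sub, map_mul, map_mul, phi_X_inl_not_mem K G U ha,
    phi_X_inr_not_mem K G U hb, phi_X_inl_not_mem K G U hb,
    phi_X_inr_not_mem K G U ha] at h0
  set A : (CC G U ⊕ CC G U) ⊕ Fin n := Sum.inl (Sum.inl (cOf G U ha))
  set B : (CC G U ⊕ CC G U) ⊕ Fin n := Sum.inl (Sum.inr (cOf G U hb))
  set A' : (CC G U ⊕ CC G U) ⊕ Fin n := Sum.inl (Sum.inl (cOf G U hb))
  set B' : (CC G U ⊕ CC G U) ⊕ Fin n := Sum.inl (Sum.inr (cOf G U ha))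
  have hXX : ∀ (u v w x : (CC G U ⊕ CC G U) ⊕ Fin n),
      (X u * X v * (X w * X x) : MvPolynomial ((CC G U ⊕ CC G U) ⊕ Fin n) K)
      = monomial (Finsupp.single u 1 + Finsupp.single v 1 + (Finsupp.single w 1
        + Finsupp.single x 1)) 1 := by
    intro u v w x
    simp only [X, monomial_mul, one_mul]
  rw [hXX, hXX] at h0
  set m1 := Finsupp.single A 1 + Finsupp.single (Sum.inr a : (CC G U ⊕ CC G U) ⊕ Fin n) 1
    + (Finsupp.single B 1 + Finsupp.single (Sum.inr b : (CC G U ⊕ CC G U) ⊕ Fin n) 1)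
  set m2 := Finsupp.single A' 1 + Finsupp.single (Sum.inr b : (CC G U ⊕ CC G U) ⊕ Fin n) 1
    + (Finsupp.single B' 1 + Finsupp.single (Sum.inr a : (CC G U ⊕ CC G U) ⊕ Fin n) 1)
  have hm : m1 ≠ m2 := by
    intro heq
    have hA := DFunLike.congr_fun heq A
    simp only [m1, m2, Finsupp.add_apply, Finsupp.single_apply, A, B, A', B'] at hA
    have hcc' : cOf G U hb ≠ cOf G U ha := Ne.symm hcc
    simp [hcc'] at hA
  have := congrArg (coeff m1) h0
  rw [coeff_sub, coeff_monomial, coeff_monomial, if_pos rfl, if_neg (fun h => hm h.symm),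
    coeff_zero] at this
  simp at this

lemma edgeBinomial_mem_of_left {i : Fin n} (j : Fin n) (hi : i ∈ U) :
    edgeBinomial K i j ∈ componentPrime K G U := by
  rw [edgeBinomial]
  exact Ideal.sub_mem _
    (Ideal.mul_mem_right _ _ (X_inl_mem_componentPrime K G U hi))
    (Ideal.mul_mem_left _ _ (X_inr_mem_componentPrime K G U hi))

lemma edgeBinomial_mem_of_right (i : Fin n) {j : Fin n} (hj : j ∈ U) :
    edgeBinomial K i j ∈ componentPrime K G U := by
  rw [edgeBinomial]
  exact Ideal.sub_mem _
    (Ideal.mul_mem_left _ _ (X_inr_mem_componentPrime K G U hj))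
    (Ideal.mul_mem_right _ _ (X_inl_mem_componentPrime K G U hj))

lemma bei_le_componentPrime : binomialEdgeIdeal K G ≤ componentPrime K G U := by
  rw [binomialEdgeIdeal, Ideal.span_le]
  rintro p ⟨i, j, hadj, hij, rfl⟩
  by_cases hi : i ∈ U
  · exact edgeBinomial_mem_of_left K G U j hi
  by_cases hj : j ∈ U
  · exact edgeBinomial_mem_of_right K G U i hj
  · have hadj' : (G.induce Uᶜ).Adj ⟨i, hi⟩ ⟨j, hj⟩ := hadj
    exact edgeBinomial_mem_componentPrime K G U hi hj hadj'.reachable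

lemma reachable_induce_mono {A B : Set (Fin n)} (hAB : A ⊆ B) (a b : ↑A)
    (h : (G.induce A).Reachable a b) :
    (G.induce B).Reachable ⟨a.1, hAB a.2⟩ ⟨b.1, hAB b.2⟩ := by
  let f : G.induce A →g G.induce B :=
    ⟨fun x => ⟨x.1, hAB x.2⟩, fun {u v} hadj => hadj⟩
  exact h.map f

/-- the set of vertices both of whose variables lie in `Q` -/
def Tset (Q : Ideal (MvPolynomial (Fin n ⊕ Fin n) K)) : Set (Fin n) :=
  {i | X (Sum.inl i) ∈ Q ∧ X (Sum.inr i) ∈ Q}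

lemma edgeBinomial_mem_of_adj {Q : Ideal (MvPolynomial (Fin n ⊕ Fin n) K)}
    (hJ : binomialEdgeIdeal K G ≤ Q) {i j : Fin n} (hadj : G.Adj i j) :
    edgeBinomial K i j ∈ Q := by
  rcases lt_trichotomy i j with h | h | h
  · exact hJ (Ideal.subset_span ⟨i, j, hadj, h, rfl⟩)
  · exact absurd h hadj.ne
  · have : edgeBinomial K i j = - edgeBinomial K j i := by
      rw [edgeBinomial, edgeBinomial]; ring
    rw [this]
    exact neg_mem (hJ (Ideal.subset_span ⟨j, i, hadj.symm, h, rfl⟩) : _)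

lemma edgeBinomial_x_identity (a c b : Fin n) :
    X (Sum.inl c) * edgeBinomial K a b
      = X (Sum.inl a) * edgeBinomial K c b + X (Sum.inl b) * edgeBinomial K a c := by
  simp only [edgeBinomial]; ring

lemma edgeBinomial_y_identity (a c b : Fin n) :
    X (Sum.inr c) * edgeBinomial K a b
      = X (Sum.inr a) * edgeBinomial K c b + X (Sum.inr b) * edgeBinomial K a c := by
  simp only [edgeBinomial]; ring

lemma walk_edgeBinomial_mem {Q : Ideal (MvPolynomial (Fin n ⊕ Fin n) K)}
    (hQ : Q.IsPrime) (hJ : binomialEdgeIdeal K G ≤ Q) :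
    ∀ (a b : ↑(Tset K Q)ᶜ), (G.induce (Tset K Q)ᶜ).Walk a b →
      edgeBinomial K a.1 b.1 ∈ Q := by
  intro a b w
  induction w with
  | nil =>
    have h0 : ∀ c : Fin n, edgeBinomial K c c = (0 : MvPolynomial (Fin n ⊕ Fin n) K) :=
      fun c => by rw [edgeBinomial]; ring
    rw [h0]; exact Ideal.zero_mem _
  | @cons u v w' hadj p ih =>
    have hGadj : G.Adj u.1 v.1 := hadj
    have hfuv : edgeBinomial K u.1 v.1 ∈ Q := edgeBinomial_mem_of_adj K G hJ hGadj
    have hfvw : edgeBinomial K v.1 w'.1 ∈ Q := ih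
    have hx : X (Sum.inl v.1) * edgeBinomial K u.1 w'.1 ∈ Q := by
      rw [edgeBinomial_x_identity]
      exact Ideal.add_mem _ (Ideal.mul_mem_left _ _ hfvw) (Ideal.mul_mem_left _ _ hfuv)
    have hy : X (Sum.inr v.1) * edgeBinomial K u.1 w'.1 ∈ Q := by
      rw [edgeBinomial_y_identity]
      exact Ideal.add_mem _ (Ideal.mul_mem_left _ _ hfvw) (Ideal.mul_mem_left _ _ hfuv)
    have hv : ¬ (X (Sum.inl v.1) ∈ Q ∧ X (Sum.inr v.1) ∈ Q) := v.2
    rcases not_and_or.mp hv with h | h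
    · rcases hQ.mem_or_mem hx with h' | h'
      · exact absurd h' h
      · exact h'
    · rcases hQ.mem_or_mem hy with h' | h'
      · exact absurd h' h
      · exact h'

lemma componentPrime_Tset_le {Q : Ideal (MvPolynomial (Fin n ⊕ Fin n) K)}
    (hQ : Q.IsPrime) (hJ : binomialEdgeIdeal K G ≤ Q) :
    componentPrime K G (Tset K Q) ≤ Q := by
  rw [componentPrime, Ideal.span_le]
  rintro p (⟨i, hi, (rfl | rfl)⟩ | ⟨a, b, hr, rfl⟩)
  · exact hi.1
  · exact hi.2
  · obtain ⟨w⟩ := hr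
    exact walk_edgeBinomial_mem K G hQ hJ a b w

lemma compl_subset_compl_diff (S : Set (Fin n)) (i : Fin n) : Sᶜ ⊆ (S \ {i})ᶜ := by
  intro j hj
  simp only [Set.mem_compl_iff, Set.mem_diff, Set.mem_singleton_iff] at *
  tauto

lemma walk_avoid {S : Set (Fin n)} {i : Fin n} :
    ∀ {x y : ↑(S \ {i})ᶜ} (w : (G.induce (S \ {i})ᶜ).Walk x y),
      (∀ u ∈ w.support, u.1 ≠ i) →
      ∃ (hx : x.1 ∈ Sᶜ) (hy : y.1 ∈ Sᶜ), (G.induce Sᶜ).Reachable ⟨x.1, hx⟩ ⟨y.1, hy⟩ := by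
  intro x y w
  induction w with
  | @nil u =>
    intro hs
    have hui : u.1 ≠ i := hs u (SimpleGraph.Walk.start_mem_support _)
    have hu : u.1 ∈ Sᶜ := by
      have := u.2
      simp only [Set.mem_compl_iff, Set.mem_diff, Set.mem_singleton_iff] at *
      tauto
    exact ⟨hu, hu, SimpleGraph.Reachable.refl _⟩
  | @cons u v y' hadj p ih =>
    intro hs
    have hui : u.1 ≠ i := hs u (SimpleGraph.Walk.start_mem_support _)
    have hu : u.1 ∈ Sᶜ := by
      have := u.2
      simp only [Set.mem_compl_iff, Set.mem_diff, Set.mem_singleton_iff] at *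
      tauto
    have hsp : ∀ w' ∈ p.support, w'.1 ≠ i := by
      intro w' hw'
      exact hs w' (by rw [SimpleGraph.Walk.support_cons]; exact List.mem_cons_of_mem _ hw')
    obtain ⟨hv, hy, hr⟩ := ih hsp
    have hadj' : (G.induce Sᶜ).Adj ⟨u.1, hu⟩ ⟨v.1, hv⟩ := hadj
    exact ⟨hu, hy, hadj'.reachable.trans hr⟩

lemma card_lt_of_merge {S : Set (Fin n)} {i : Fin n}
    (hmerge : ∃ (a b : ↑Sᶜ) (ha : a.1 ∈ (S \ {i})ᶜ) (hb : b.1 ∈ (S \ {i})ᶜ),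
      (G.induce (S \ {i})ᶜ).Reachable ⟨a.1, ha⟩ ⟨b.1, hb⟩
        ∧ ¬ (G.induce Sᶜ).Reachable a b) :
    numComponents G (S \ {i}) < numComponents G S := by
  classical
  have hAB := compl_subset_compl_diff S i
  let f : G.induce Sᶜ →g G.induce (S \ {i})ᶜ :=
    ⟨fun x => ⟨x.1, hAB x.2⟩, fun {u v} hadj => hadj⟩
  let Φ : (G.induce Sᶜ).ConnectedComponent → (G.induce (S \ {i})ᶜ).ConnectedComponent :=
    SimpleGraph.ConnectedComponent.map f
  obtain ⟨a, b, ha, hb, hrB, hnA⟩ := hmerge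
  have hfa : f a = ⟨a.1, ha⟩ := rfl
  have hfb : f b = ⟨b.1, hb⟩ := rfl
  have hsurj : Function.Surjective Φ := by
    apply SimpleGraph.ConnectedComponent.ind
    intro v
    by_cases hvi : v.1 = i
    · by_cases hreach : (G.induce (S \ {i})ᶜ).Reachable ⟨a.1, ha⟩ v
      · refine ⟨(G.induce Sᶜ).connectedComponentMk a, ?_⟩
        rw [show Φ ((G.induce Sᶜ).connectedComponentMk a)
            = (G.induce (S \ {i})ᶜ).connectedComponentMk (f a) from
          SimpleGraph.ConnectedComponent.map_mk f a, hfa]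
        exact SimpleGraph.ConnectedComponent.sound hreach
      · exfalso
        obtain ⟨w⟩ := hrB
        by_cases hvw : ∃ u ∈ w.support, u.1 = i
        · obtain ⟨u, hu, hui⟩ := hvw
          have huv : u = v := Subtype.ext (hui.trans hvi.symm)
          subst huv
          exact hreach ⟨w.takeUntil u hu⟩
        · push_neg at hvw
          obtain ⟨hx, hy, hr⟩ := walk_avoid G w hvw
          exact hnA hr
    · have hvA : v.1 ∈ Sᶜ := by
        have := v.2
        simp only [Set.mem_compl_iff, Set.mem_diff, Set.mem_singleton_iff] at *
        tauto
      refine ⟨(G.induce Sᶜ).connectedComponentMk ⟨v.1, hvA⟩, ?_⟩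
      rw [show Φ ((G.induce Sᶜ).connectedComponentMk ⟨v.1, hvA⟩)
          = (G.induce (S \ {i})ᶜ).connectedComponentMk (f ⟨v.1, hvA⟩) from
        SimpleGraph.ConnectedComponent.map_mk f _]
      rfl
  have hninj : ¬ Function.Injective Φ := by
    intro hinj
    have h1 : Φ ((G.induce Sᶜ).connectedComponentMk a)
        = Φ ((G.induce Sᶜ).connectedComponentMk b) := by
      simp only [Φ, SimpleGraph.ConnectedComponent.map_mk, hfa, hfb]
      exact SimpleGraph.ConnectedComponent.sound hrB
    have h2 := hinj h1
    exact hnA (SimpleGraph.ConnectedComponent.exact h2)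
  haveI : Fintype ((G.induce Sᶜ).ConnectedComponent) := Fintype.ofFinite _
  haveI : Fintype ((G.induce (S \ {i})ᶜ).ConnectedComponent) := Fintype.ofFinite _
  rw [numComponents, numComponents, Nat.card_eq_fintype_card, Nat.card_eq_fintype_card]
  exact Fintype.card_lt_of_surjective_not_injective Φ hsurj hninj

lemma card_le_of_nomerge {S : Set (Fin n)} {i : Fin n}
    (hno : ∀ (a b : ↑Sᶜ) (ha : a.1 ∈ (S \ {i})ᶜ) (hb : b.1 ∈ (S \ {i})ᶜ),
      (G.induce (S \ {i})ᶜ).Reachable ⟨a.1, ha⟩ ⟨b.1, hb⟩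
        → (G.induce Sᶜ).Reachable a b) :
    numComponents G S ≤ numComponents G (S \ {i}) := by
  classical
  have hAB := compl_subset_compl_diff S i
  let f : G.induce Sᶜ →g G.induce (S \ {i})ᶜ :=
    ⟨fun x => ⟨x.1, hAB x.2⟩, fun {u v} hadj => hadj⟩
  let Φ : (G.induce Sᶜ).ConnectedComponent → (G.induce (S \ {i})ᶜ).ConnectedComponent :=
    SimpleGraph.ConnectedComponent.map f
  have hinj : Function.Injective Φ := by
    intro c d
    refine SimpleGraph.ConnectedComponent.ind₂
      (β := fun c d => Φ c = Φ d → c = d) ?_ c d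
    intro v w h
    simp only [Φ, SimpleGraph.ConnectedComponent.map_mk] at h
    have hr := SimpleGraph.ConnectedComponent.exact h
    exact SimpleGraph.ConnectedComponent.sound (hno v w _ _ hr)
  exact Nat.card_le_card_of_injective Φ hinj

lemma componentPrime_diff_le (S : Set (Fin n)) (i : Fin n) (hi : i ∈ S)
    (hnot : ¬ numComponents G (S \ {i}) < numComponents G S) :
    componentPrime K G (S \ {i}) ≤ componentPrime K G S := by
  have hno : ∀ (a b : ↑Sᶜ) (ha : a.1 ∈ (S \ {i})ᶜ) (hb : b.1 ∈ (S \ {i})ᶜ),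
      (G.induce (S \ {i})ᶜ).Reachable ⟨a.1, ha⟩ ⟨b.1, hb⟩
        → (G.induce Sᶜ).Reachable a b := by
    intro a b ha hb hrB
    by_contra hnA
    exact hnot (card_lt_of_merge G ⟨a, b, ha, hb, hrB, hnA⟩)
  rw [componentPrime, Ideal.span_le]
  rintro p (⟨j, hj, (rfl | rfl)⟩ | ⟨a, b, hr, rfl⟩)
  · exact X_inl_mem_componentPrime K G S hj.1
  · exact X_inr_mem_componentPrime K G S hj.1
  · by_cases hai : a.1 = i
    · exact edgeBinomial_mem_of_left K G S b.1 (show a.1 ∈ S by rw [hai]; exact hi)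
    · by_cases hbi : b.1 = i
      · exact edgeBinomial_mem_of_right K G S a.1 (show b.1 ∈ S by rw [hbi]; exact hi)
      · have haA : a.1 ∈ Sᶜ := by
          have := a.2
          simp only [Set.mem_compl_iff, Set.mem_diff, Set.mem_singleton_iff] at *
          tauto
        have hbA : b.1 ∈ Sᶜ := by
          have := b.2
          simp only [Set.mem_compl_iff, Set.mem_diff, Set.mem_singleton_iff] at *
          tauto
        have hrA : (G.induce Sᶜ).Reachable ⟨a.1, haA⟩ ⟨b.1, hbA⟩ :=
          hno ⟨a.1, haA⟩ ⟨b.1, hbA⟩ a.2 b.2 hr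
        exact edgeBinomial_mem_componentPrime K G S haA hbA hrA

end BEI

theorem componentPrime_mem_minimalPrimes_iff (K : Type*) [Field K] {n : ℕ}
    (G : SimpleGraph (Fin n)) (hconn : G.Connected) (S : Set (Fin n)) :
    componentPrime K G S ∈ (binomialEdgeIdeal K G).minimalPrimes ↔
      S = ∅ ∨ (S ≠ ∅ ∧ ∀ i ∈ S, numComponents G (S \ {i}) < numComponents G S) := by
  classical
  constructor
  · intro hmin
    have hmin' : Minimal (fun q => q.IsPrime ∧ binomialEdgeIdeal K G ≤ q)
        (componentPrime K G S) := hmin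
    rcases eq_or_ne S ∅ with rfl | hS
    · exact Or.inl rfl
    · refine Or.inr ⟨hS, fun i hi => ?_⟩
      by_contra hnot
      have hsub := BEI.componentPrime_diff_le K G S i hi hnot
      have hq : (componentPrime K G (S \ {i})).IsPrime ∧
          binomialEdgeIdeal K G ≤ componentPrime K G (S \ {i}) :=
        ⟨BEI.componentPrime_isPrime K G _, BEI.bei_le_componentPrime K G _⟩
      have hle := hmin'.2 hq hsub
      have hx : X (Sum.inl i) ∈ componentPrime K G (S \ {i}) :=
        hle (BEI.X_inl_mem_componentPrime K G S hi)
      exact BEI.X_inl_not_mem_componentPrime K G (S \ {i}) (by simp) hx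
  · intro h
    show Minimal (fun q => q.IsPrime ∧ binomialEdgeIdeal K G ≤ q) (componentPrime K G S)
    refine ⟨⟨BEI.componentPrime_isPrime K G S, BEI.bei_le_componentPrime K G S⟩, ?_⟩
    intro Q hQ hQle
    have hTQ := BEI.componentPrime_Tset_le K G hQ.1 hQ.2
    have hTS : BEI.Tset K Q ⊆ S := by
      intro j hj
      by_contra hjS
      exact BEI.X_inl_not_mem_componentPrime K G S hjS (hQle hj.1)
    rcases h with rfl | ⟨hSne, hcut⟩
    · have hT : BEI.Tset K Q = ∅ := Set.subset_empty_iff.mp hTS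
      rw [← hT]
      exact hTQ
    · by_cases hTSeq : BEI.Tset K Q = S
      · rw [← hTSeq]; exact hTQ
      · exfalso
        obtain ⟨i, hiS, hiT⟩ : ∃ i, i ∈ S ∧ i ∉ BEI.Tset K Q := by
          rcases Set.exists_of_ssubset
            (ssubset_of_subset_of_ne hTS hTSeq) with ⟨i, hi1, hi2⟩
          exact ⟨i, hi1, hi2⟩
        have hc := hcut i hiS
        have hmerge : ∃ (a b : ↑Sᶜ) (ha : a.1 ∈ (S \ {i})ᶜ) (hb : b.1 ∈ (S \ {i})ᶜ),
            (G.induce (S \ {i})ᶜ).Reachable ⟨a.1, ha⟩ ⟨b.1, hb⟩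
              ∧ ¬ (G.induce Sᶜ).Reachable a b := by
          by_contra hcon
          push_neg at hcon
          have hle' := BEI.card_le_of_nomerge G (S := S) (i := i)
            (fun a b ha hb hrB => hcon a b ha hb hrB)
          omega
        obtain ⟨a, b, ha, hb, hrB, hnA⟩ := hmerge
        have hTsub : BEI.Tset K Q ⊆ (S \ {i}) := by
          intro j hj
          refine ⟨hTS hj, ?_⟩
          intro hji
          rw [Set.mem_singleton_iff] at hji
          exact hiT (hji ▸ hj)
        have hsub2 : (S \ {i})ᶜ ⊆ (BEI.Tset K Q)ᶜ := Set.compl_subset_compl.mpr hTsub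
        have hreachT := BEI.reachable_induce_mono G hsub2 ⟨a.1, ha⟩ ⟨b.1, hb⟩ hrB
        have haT : a.1 ∉ BEI.Tset K Q := hsub2 ha
        have hbT : b.1 ∉ BEI.Tset K Q := hsub2 hb
        have hfQ : edgeBinomial K a.1 b.1 ∈ Q :=
          hTQ (BEI.edgeBinomial_mem_componentPrime K G _ haT hbT hreachT)
        have hfS := hQle hfQ
        have haS : a.1 ∉ S := a.2
        have hbS : b.1 ∉ S := b.2
        exact BEI.edgeBinomial_not_mem_componentPrime K G S haS hbS hnA hfS
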